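/- Let X be a real Banach space and suppose that there is a sequence (fₙ) in the unit sphere of X* such that for every x in the closed unit ball of X there are two sequences (yₙ), (zₙ) in the unit sphere of X which converge weakly to x and such that fₙ(yₙ − zₙ) = 2 for every n ∈ ℕ. Let R : X → Y be a compact linear operator into a Banach space Y and define an equivalent norm on X by |||x||| = ‖x‖_X + ‖R(x)‖_Y. Then there is a sequence (gₙ) in the unit sphere of (X,|||·|||)* such that, given x ∈ X with |||x||| = 1, there exist two sequences (ỹₙ), (z̃ₙ) in the unit ball of (X,|||·|||) that both converge weakly to x and such that liminfₙ gₙ(ỹₙ − z̃ₙ) ≥ 2(1 + ‖R‖)⁻¹. -/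

import Mathlib

set_option maxHeartbeats 1000000


noncomputable section
open NormedSpace Filter Topology

variable {X : Type*} [NormedAddCommGroup X] [NormedSpace ℝ X]

/-- The dual norm associated to an equivalent norm `p`. -/
def dualNormOf (p : X → ℝ) (f : StrongDual ℝ X) : ℝ :=
  sSup ((fun x => |f x|) '' {x : X | p x ≤ 1})


section aux
variable {Y : Type*} [NormedAddCommGroup Y] [NormedSpace ℝ Y] (R : X →L[ℝ] Y)

lemma S_nonempty : ((0:X) ∈ {x : X | ‖x‖ + ‖R x‖ ≤ 1}) := by
  simp

lemma bddAbove_img (φ : StrongDual ℝ X) :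
    BddAbove ((fun x => |φ x|) '' {x : X | ‖x‖ + ‖R x‖ ≤ 1}) := by
  refine ⟨‖φ‖, fun t ht => ?_⟩
  obtain ⟨x, hx, rfl⟩ := ht
  have hx1 : ‖x‖ ≤ 1 := le_trans (le_add_of_nonneg_right (norm_nonneg _)) hx
  calc |φ x| ≤ ‖φ‖ * ‖x‖ := φ.le_opNorm x
    _ ≤ ‖φ‖ * 1 := mul_le_mul_of_nonneg_left hx1 (norm_nonneg φ)
    _ = ‖φ‖ := mul_one _

lemma le_dualNormOf (φ : StrongDual ℝ X) {x : X} (hx : ‖x‖ + ‖R x‖ ≤ 1) :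
    |φ x| ≤ dualNormOf (fun x : X => ‖x‖ + ‖R x‖) φ :=
  le_csSup (bddAbove_img R φ) ⟨x, hx, rfl⟩

lemma dualNormOf_le (φ : StrongDual ℝ X) {b : ℝ}
    (hb : ∀ x : X, ‖x‖ + ‖R x‖ ≤ 1 → |φ x| ≤ b) :
    dualNormOf (fun x : X => ‖x‖ + ‖R x‖) φ ≤ b := by
  refine csSup_le ⟨0, ⟨0, S_nonempty R, by simp⟩⟩ ?_
  rintro t ⟨x, hx, rfl⟩
  exact hb x hx

end aux

lemma norm_one_eval {f : StrongDual ℝ X} {y z : X} (hf : ‖f‖ = 1) (hy : ‖y‖ = 1) (hz : ‖z‖ = 1)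
    (h2 : f (y - z) = 2) : f y = 1 ∧ f z = -1 := by
  have hy1 : f y ≤ 1 := by
    calc f y ≤ |f y| := le_abs_self _
      _ ≤ ‖f‖ * ‖y‖ := f.le_opNorm y
      _ = 1 := by rw [hf, hy, mul_one]
  have hz1 : -1 ≤ f z := by
    have : |f z| ≤ 1 := by
      calc |f z| ≤ ‖f‖ * ‖z‖ := f.le_opNorm z
        _ = 1 := by rw [hf, hz, mul_one]
    linarith [neg_abs_le (f z)]
  have hsub : f y - f z = 2 := by rw [← map_sub]; exact h2
  constructor <;> linarith

lemma compact_weak_to_norm {X Y : Type*} [NormedAddCommGroup X] [NormedSpace ℝ X]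
    [NormedAddCommGroup Y] [NormedSpace ℝ Y]
    (R : X →L[ℝ] Y) (hR : IsCompactOperator R) (u : ℕ → X) (x : X)
    (hb : ∀ n, ‖u n‖ ≤ 1)
    (hw : ∀ g : StrongDual ℝ X, Tendsto (fun n => g (u n)) atTop (𝓝 (g x))) :
    Tendsto (fun n => R (u n)) atTop (𝓝 (R x)) := by
  have hK : IsCompact (closure (R '' Metric.closedBall (0:X) 1)) :=
    hR.isCompact_closure_image_closedBall (𝕜₁ := ℝ) 1
  refine tendsto_of_subseq_tendsto fun ns hns => ?_
  have hmem : ∀ k, R (u (ns k)) ∈ closure (R '' Metric.closedBall (0:X) 1) := fun k =>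
    subset_closure ⟨u (ns k), by simpa using hb (ns k), rfl⟩
  obtain ⟨w, -, ms, hms, hlim⟩ := hK.tendsto_subseq hmem
  refine ⟨ms, ?_⟩
  have hwx : w = R x := by
    rw [NormedSpace.eq_iff_forall_dual_eq (𝕜 := ℝ)]
    intro g
    have h1 : Tendsto (fun k => g (R (u (ns (ms k))))) atTop (𝓝 (g w)) :=
      (g.continuous.tendsto w).comp hlim
    have h2 : Tendsto (fun k => g (R (u (ns (ms k))))) atTop (𝓝 (g (R x))) := by
      have := (hw (g.comp R)).comp (hns.comp hms.tendsto_atTop)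
      simpa [Function.comp_def] using this
    exact tendsto_nhds_unique h1 h2
  simpa [hwx, Function.comp_def] using hlim

theorem transfer_of_diameter_two_property
    (X Y : Type*) [NormedAddCommGroup X] [NormedSpace ℝ X] [CompleteSpace X]
    [NormedAddCommGroup Y] [NormedSpace ℝ Y] [CompleteSpace Y]
    (f : ℕ → StrongDual ℝ X) (hf : ∀ n, ‖f n‖ = 1)
    (hprop : ∀ x : X, ‖x‖ ≤ 1 →
      ∃ y z : ℕ → X, (∀ n, ‖y n‖ = 1) ∧ (∀ n, ‖z n‖ = 1) ∧
        (∀ g : StrongDual ℝ X, Tendsto (fun k => g (y k)) atTop (𝓝 (g x))) ∧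
        (∀ g : StrongDual ℝ X, Tendsto (fun k => g (z k)) atTop (𝓝 (g x))) ∧
        ∀ n : ℕ, f n (y n - z n) = 2)
    (R : X →L[ℝ] Y) (hR : IsCompactOperator R) :
    ∃ g : ℕ → StrongDual ℝ X,
      (∀ n, dualNormOf (fun x : X => ‖x‖ + ‖R x‖) (g n) = 1) ∧
      ∀ x : X, ‖x‖ + ‖R x‖ = 1 →
        ∃ ty tz : ℕ → X,
          (∀ n, ‖ty n‖ + ‖R (ty n)‖ ≤ 1) ∧ (∀ n, ‖tz n‖ + ‖R (tz n)‖ ≤ 1) ∧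
          (∀ h : StrongDual ℝ X, Tendsto (fun k => h (ty k)) atTop (𝓝 (h x))) ∧
          (∀ h : StrongDual ℝ X, Tendsto (fun k => h (tz k)) atTop (𝓝 (h x))) ∧
          2 / (1 + ‖R‖) ≤ liminf (fun n => g n (ty n - tz n)) atTop := by
  classical
  have hRpos : (0:ℝ) < 1 + ‖R‖ := by positivity
  obtain ⟨y0, z0, hy0, hz0, -, -, hfe0⟩ := hprop 0 (by simp)
  have hfy0 : ∀ n, f n (y0 n) = 1 := fun n => (norm_one_eval (hf n) (hy0 n) (hz0 n) (hfe0 n)).1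
  set d : ℕ → ℝ := fun n => dualNormOf (fun x : X => ‖x‖ + ‖R x‖) (f n) with hd
  have hd_le : ∀ n, d n ≤ 1 := by
    intro n
    refine dualNormOf_le R (f n) (fun x hx => ?_)
    have hx1 : ‖x‖ ≤ 1 := le_trans (le_add_of_nonneg_right (norm_nonneg _)) hx
    calc |f n x| ≤ ‖f n‖ * ‖x‖ := (f n).le_opNorm x
      _ ≤ 1 * 1 := by rw [hf n]; exact mul_le_mul_of_nonneg_left hx1 zero_le_one
      _ = 1 := one_mul 1
  have hd_ge : ∀ n, (1 + ‖R‖)⁻¹ ≤ d n := by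
    intro n
    have hmem : ‖(1 + ‖R‖)⁻¹ • y0 n‖ + ‖R ((1 + ‖R‖)⁻¹ • y0 n)‖ ≤ 1 := by
      rw [map_smul, norm_smul, norm_smul, Real.norm_eq_abs, abs_of_pos (by positivity), hy0 n,
        mul_one]
      have hb : ‖R (y0 n)‖ ≤ ‖R‖ := by simpa [hy0 n] using R.le_opNorm (y0 n)
      have h0 : (0:ℝ) < (1+‖R‖)⁻¹ := by positivity
      nlinarith [inv_mul_cancel₀ hRpos.ne']
    have hle := le_dualNormOf R (f n) hmem
    have heval : |f n ((1 + ‖R‖)⁻¹ • y0 n)| = (1+‖R‖)⁻¹ := by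
      rw [map_smul, smul_eq_mul, hfy0 n, mul_one, abs_of_pos (by positivity)]
    rwa [heval] at hle
  have hd_pos : ∀ n, 0 < d n := fun n => lt_of_lt_of_le (by positivity) (hd_ge n)
  set g : ℕ → StrongDual ℝ X := fun n => (d n)⁻¹ • f n with hg
  have hg_eval : ∀ n (x : X), g n x = (d n)⁻¹ * f n x := by
    intro n x; simp [hg, smul_eq_mul]
  have hgnorm : ∀ n, dualNormOf (fun x : X => ‖x‖ + ‖R x‖) (g n) = 1 := by
    intro n
    have hub : ∀ x : X, ‖x‖ + ‖R x‖ ≤ 1 → |g n x| ≤ 1 := by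
      intro x hx
      have h1 : |f n x| ≤ d n := le_dualNormOf R (f n) hx
      have h2 : |g n x| = (d n)⁻¹ * |f n x| := by
        rw [hg_eval, abs_mul, abs_of_pos (inv_pos.2 (hd_pos n))]
      rw [h2]
      calc (d n)⁻¹ * |f n x| ≤ (d n)⁻¹ * d n := by
            exact mul_le_mul_of_nonneg_left h1 (inv_pos.2 (hd_pos n)).le
        _ = 1 := inv_mul_cancel₀ (hd_pos n).ne'
    refine le_antisymm (dualNormOf_le R (g n) hub) ?_
    have hkey : d n ≤ d n * dualNormOf (fun x : X => ‖x‖ + ‖R x‖) (g n) := by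
      refine dualNormOf_le R (f n) (fun x hx => ?_)
      have h3 := le_dualNormOf R (g n) hx
      have heq : |f n x| = d n * |g n x| := by
        rw [hg_eval, abs_mul, abs_of_pos (inv_pos.2 (hd_pos n)), ← mul_assoc,
          mul_inv_cancel₀ (hd_pos n).ne', one_mul]
      rw [heq]
      exact mul_le_mul_of_nonneg_left h3 (hd_pos n).le
    nlinarith [hd_pos n]
  refine ⟨g, hgnorm, ?_⟩
  intro x hx
  have hxne : x ≠ 0 := by rintro rfl; simp at hx
  have ha_pos : 0 < ‖x‖ := norm_pos_iff.2 hxne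
  set a := ‖x‖ with ha
  set x' := a⁻¹ • x with hx'
  have hx'norm : ‖x'‖ = 1 := by
    rw [hx', norm_smul, Real.norm_eq_abs, abs_of_pos (inv_pos.2 ha_pos), ← ha,
      inv_mul_cancel₀ ha_pos.ne']
  obtain ⟨y, z, hy, hz, hwy, hwz, hfe⟩ := hprop x' hx'norm.le
  have hfy : ∀ n, f n (y n) = 1 := fun n => (norm_one_eval (hf n) (hy n) (hz n) (hfe n)).1
  have hfz : ∀ n, f n (z n) = -1 := fun n => (norm_one_eval (hf n) (hy n) (hz n) (hfe n)).2
  have hRx' : ‖R x'‖ = a⁻¹ * ‖R x‖ := by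
    rw [hx', map_smul, norm_smul, Real.norm_eq_abs, abs_of_pos (inv_pos.2 ha_pos)]
  have hinv : (1 + ‖R x'‖)⁻¹ = a := by
    rw [hRx']
    have h1 : 1 + a⁻¹ * ‖R x‖ = a⁻¹ := by
      field_simp
      linarith [hx]
    rw [h1, inv_inv]
  have key : ∀ (u : ℕ → X), (∀ n, ‖u n‖ = 1) →
      (∀ h : StrongDual ℝ X, Tendsto (fun k => h (u k)) atTop (𝓝 (h x'))) →
      ∃ s : ℕ → ℝ, (∀ n, 0 < s n) ∧ (∀ n, s n ≤ a) ∧ (∀ n, s n * (1 + ‖R (u n)‖) ≤ 1) ∧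
        Tendsto s atTop (𝓝 a) := by
    intro u hu hwu
    refine ⟨fun n => min a (1 + ‖R (u n)‖)⁻¹,
      fun n => lt_min ha_pos (inv_pos.2 (by positivity)), fun n => min_le_left _ _,
      fun n => ?_, ?_⟩
    · have h1 : (0:ℝ) < 1 + ‖R (u n)‖ := by positivity
      calc min a (1 + ‖R (u n)‖)⁻¹ * (1 + ‖R (u n)‖)
          ≤ (1 + ‖R (u n)‖)⁻¹ * (1 + ‖R (u n)‖) := by
            exact mul_le_mul_of_nonneg_right (min_le_right _ _) h1.le
        _ = 1 := inv_mul_cancel₀ h1.ne'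
    · have hRu : Tendsto (fun n => ‖R (u n)‖) atTop (𝓝 ‖R x'‖) :=
        (compact_weak_to_norm R hR u x' (fun n => (hu n).le) hwu).norm
      have h2 : Tendsto (fun n => (1 + ‖R (u n)‖)⁻¹) atTop (𝓝 ((1 + ‖R x'‖)⁻¹)) :=
        ((tendsto_const_nhds.add hRu).inv₀ (by positivity))
      have h3 := (tendsto_const_nhds (x := a)).min h2
      rwa [hinv, min_self] at h3
  obtain ⟨s, hs_pos, hs_le_a, hs_le, hs_lim⟩ := key y hy hwy
  obtain ⟨t, ht_pos, ht_le_a, ht_le, ht_lim⟩ := key z hz hwz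
  have pbound : ∀ (c : ℕ → ℝ) (u : ℕ → X), (∀ n, 0 < c n) → (∀ n, ‖u n‖ = 1) →
      (∀ n, c n * (1 + ‖R (u n)‖) ≤ 1) → ∀ n, ‖c n • u n‖ + ‖R (c n • u n)‖ ≤ 1 := by
    intro c u hc hu hcu n
    rw [map_smul, norm_smul, norm_smul, Real.norm_eq_abs, abs_of_pos (hc n), hu n, mul_one]
    calc c n + c n * ‖R (u n)‖ = c n * (1 + ‖R (u n)‖) := by ring
      _ ≤ 1 := hcu n
  have wconv : ∀ (c : ℕ → ℝ) (u : ℕ → X), Tendsto c atTop (𝓝 a) →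
      (∀ h : StrongDual ℝ X, Tendsto (fun k => h (u k)) atTop (𝓝 (h x'))) →
      ∀ h : StrongDual ℝ X, Tendsto (fun k => h (c k • u k)) atTop (𝓝 (h x)) := by
    intro c u hc hwu h
    have h1 := hc.mul (hwu h)
    have heq : a * h x' = h x := by
      rw [hx', map_smul, smul_eq_mul, ← mul_assoc, mul_inv_cancel₀ ha_pos.ne', one_mul]
    simpa [map_smul, smul_eq_mul, heq] using h1
  refine ⟨fun n => s n • y n, fun n => t n • z n,
    pbound s y hs_pos hy hs_le, pbound t z ht_pos hz ht_le,
    wconv s y hs_lim hwy, wconv t z ht_lim hwz, ?_⟩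
  have hv_eq : ∀ n, g n (s n • y n - t n • z n) = (d n)⁻¹ * (s n + t n) := by
    intro n
    rw [hg_eval, map_sub, map_smul, map_smul, smul_eq_mul, smul_eq_mul, hfy n, hfz n]
    ring
  have hv_ge : ∀ n, s n + t n ≤ g n (s n • y n - t n • z n) := by
    intro n
    rw [hv_eq n]
    have h1 : 1 ≤ (d n)⁻¹ := by
      nlinarith [inv_mul_cancel₀ (hd_pos n).ne', inv_pos.2 (hd_pos n), hd_le n]
    nlinarith [hs_pos n, ht_pos n]
  have hc_lim : Tendsto (fun n => s n + t n) atTop (𝓝 (a + a)) := hs_lim.add ht_lim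
  have hliminf_c : liminf (fun n => s n + t n) atTop = a + a := hc_lim.liminf_eq
  have hle : liminf (fun n => s n + t n) atTop ≤
      liminf (fun n => g n (s n • y n - t n • z n)) atTop := by
    refine liminf_le_liminf (Eventually.of_forall hv_ge) ?_ ?_
    · exact ⟨0, Filter.eventually_map.2 (Eventually.of_forall fun n => by linarith [hs_pos n, ht_pos n])⟩
    · refine isCoboundedUnder_ge_of_eventually_le atTop (x := 2 * (1 + ‖R‖))
        (Eventually.of_forall fun n => ?_)
      rw [hv_eq n]
      have h1 : (d n)⁻¹ ≤ 1 + ‖R‖ := by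
        rw [inv_le_comm₀ (hd_pos n) hRpos]
        exact hd_ge n
      have hsa : s n + t n ≤ 2 * a := by linarith [hs_le_a n, ht_le_a n]
      have ha1 : a ≤ 1 := by
        have := norm_nonneg (R x); linarith [hx]
      nlinarith [hs_pos n, ht_pos n, inv_pos.2 (hd_pos n)]
  have h2a : 2 / (1 + ‖R‖) ≤ a + a := by
    have hRxa : ‖R x‖ ≤ ‖R‖ * a := by simpa [ha] using R.le_opNorm x
    rw [div_le_iff₀ hRpos]
    nlinarith [hx, norm_nonneg R]
  calc 2 / (1 + ‖R‖) ≤ a + a := h2a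
    _ = liminf (fun n => s n + t n) atTop := hliminf_c.symm
    _ ≤ _ := hle
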